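/- For all complex ξ₂, ξ₃, p, q, η, x with Re(ξ₃) > Re(ξ₂) > 0, Re(p) > 0, Re(q) > 0 and Re(η) > -1, the extended confluent hypergeometric function admits the integral representation Φ_η^{p,q}(ξ₂;ξ₃;x) = (1/B(ξ₂, ξ₃-ξ₂)) ∫₀¹ y^{ξ₂-1} (1-y)^{ξ₃-ξ₂-1} e^{xy} S_η(-p/y) S_η(-q/(1-y)) dy, where B denotes the classical beta function. -/

import Mathlib

open MeasureTheory Complex Set

/-- The Bessel–Struve kernel function, defined by its power series. -/
noncomputable def besselStruve (η t : ℂ) : ℂ :=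
  (Complex.Gamma (η + 1) / (Real.sqrt Real.pi : ℂ)) *
    ∑' m : ℕ, t ^ m * Complex.Gamma (((m : ℂ) + 1) / 2) /
      ((m.factorial : ℂ) * Complex.Gamma ((m : ℂ) / 2 + η + 1))

/-- The extended beta function `B_η^{p,q}(ξ₁, ξ₂)`. -/
noncomputable def extBeta (η p q ξ₁ ξ₂ : ℂ) : ℂ :=
  ∫ y in (0:ℝ)..1, (y : ℂ) ^ (ξ₁ - 1) * ((1 : ℂ) - (y : ℂ)) ^ (ξ₂ - 1) *
    besselStruve η (-p / (y : ℂ)) * besselStruve η (-q / (1 - (y : ℂ)))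

/-- The Pochhammer symbol `(a)_l = Γ(a + l)/Γ(a)`. -/
noncomputable def poch (a : ℂ) (l : ℕ) : ℂ := Complex.Gamma (a + l) / Complex.Gamma a

/-- The extended Gauss hypergeometric function `F_η^{p,q}(ξ₁, ξ₂; ξ₃; x)`. -/
noncomputable def extF (η p q ξ₁ ξ₂ ξ₃ x : ℂ) : ℂ :=
  ∑' l : ℕ, poch ξ₁ l * extBeta η p q (ξ₂ + l) (ξ₃ - ξ₂) * x ^ l /
    (Complex.betaIntegral ξ₂ (ξ₃ - ξ₂) * (l.factorial : ℂ))

/-- The extended confluent hypergeometric function `Φ_η^{p,q}(ξ₂; ξ₃; x)`. -/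
noncomputable def extPhi (η p q ξ₂ ξ₃ x : ℂ) : ℂ :=
  ∑' l : ℕ, extBeta η p q (ξ₂ + l) (ξ₃ - ξ₂) * x ^ l /
    (Complex.betaIntegral ξ₂ (ξ₃ - ξ₂) * (l.factorial : ℂ))

noncomputable def shift0 (f : ℕ → ℂ) : ℕ → ℂ := fun m => match m with
  | 0 => 0
  | (k+1) => f k

lemma shift0_succ (f : ℕ → ℂ) : (fun n => shift0 f (n+1)) = f := rfl

lemma hasSum_shift0 {f : ℕ → ℂ} {a : ℂ} (h : HasSum f a) : HasSum (shift0 f) a := by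
  have := (hasSum_nat_add_iff (f := shift0 f) 1).mp (by rw [shift0_succ]; exact h)
  simpa [shift0] using this

lemma xexp_le (x : ℝ) : x * Real.exp (-x) ≤ (Real.exp 1)⁻¹ := by
  have h : x ≤ Real.exp x / Real.exp 1 := by
    rw [← Real.exp_sub]; linarith [Real.add_one_le_exp (x - 1)]
  rw [Real.exp_neg]
  calc x * (Real.exp x)⁻¹ ≤ (Real.exp x / Real.exp 1) * (Real.exp x)⁻¹ :=
        mul_le_mul_of_nonneg_right h (by positivity)
    _ = (Real.exp 1)⁻¹ := by field_simp

lemma sq_image_Ioo : (fun s : ℝ => s ^ 2) '' Ioo 0 1 = Ioo 0 1 := by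
  ext u
  constructor
  · rintro ⟨s, ⟨hs0, hs1⟩, rfl⟩
    refine ⟨?_, ?_⟩
    · show (0:ℝ) < s ^ 2; positivity
    · show s ^ 2 < 1; nlinarith
  · rintro ⟨hu0, hu1⟩
    exact ⟨Real.sqrt u, ⟨Real.sqrt_pos.2 hu0, by
      rw [show (1:ℝ) = Real.sqrt 1 by simp]; exact Real.sqrt_lt_sqrt hu0.le hu1⟩,
      Real.sq_sqrt hu0.le⟩

lemma sq_injOn_Ioo : InjOn (fun s : ℝ => s ^ 2) (Ioo 0 1) := by
  intro a ha b hb h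
  simp only at h
  nlinarith [ha.1, hb.1]

lemma cpow_sq_eq (s : ℝ) (hs : 0 < s) (z : ℂ) :
    ((s ^ 2 : ℝ) : ℂ) ^ z = (s : ℂ) ^ (2 * z) := by
  have hne : ((s ^ 2 : ℝ) : ℂ) ≠ 0 := by
    simp only [ne_eq, ofReal_eq_zero]; positivity
  have hne' : (s : ℂ) ≠ 0 := by exact_mod_cast hs.ne'
  rw [Complex.cpow_def_of_ne_zero hne, Complex.cpow_def_of_ne_zero hne',
    ← Complex.ofReal_log (by positivity : (0:ℝ) ≤ s ^ 2),
    ← Complex.ofReal_log hs.le, Real.log_pow]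
  push_cast
  ring_nf

lemma bs_moment {c : ℂ} (hc : 0 < c.re) (k : ℕ) :
    IntegrableOn (fun s : ℝ => (s:ℂ) ^ k * ((1 - s ^ 2 : ℝ) : ℂ) ^ (c - 1)) (Ioo 0 1) ∧
    ∫ s in Ioo (0:ℝ) 1, (s:ℂ) ^ k * ((1 - s ^ 2 : ℝ) : ℂ) ^ (c - 1)
      = Complex.Gamma (((k:ℂ) + 1) / 2) * Complex.Gamma c /
          (2 * Complex.Gamma (((k:ℂ) + 1) / 2 + c)) := by
  set u : ℂ := ((k:ℂ) + 1) / 2 with hu_def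
  have hu : 0 < u.re := by
    simp only [hu_def]
    rw [show ((k:ℂ) + 1) / 2 = ((((k:ℝ)+1)/2 : ℝ) : ℂ) by push_cast; ring, Complex.ofReal_re]
    positivity
  have hder : ∀ s ∈ Ioo (0:ℝ) 1,
      HasDerivWithinAt (fun s : ℝ => s ^ 2) (2 * s) (Ioo 0 1) s := by
    intro s _
    simpa using (hasDerivAt_pow 2 s).hasDerivWithinAt
  -- pointwise identity
  have hpt : ∀ s ∈ Ioo (0:ℝ) 1,
      |2 * s| • (((s ^ 2 : ℝ) : ℂ) ^ (u - 1) * (1 - ((s ^ 2 : ℝ) : ℂ)) ^ (c - 1))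
        = 2 * ((s:ℂ) ^ k * ((1 - s ^ 2 : ℝ) : ℂ) ^ (c - 1)) := by
    intro s hs
    have hs0 := hs.1
    have h2s : |2 * s| = 2 * s := abs_of_pos (by linarith)
    have hcast : (1 - ((s ^ 2 : ℝ) : ℂ)) = ((1 - s ^ 2 : ℝ) : ℂ) := by push_cast; ring
    rw [h2s, Complex.real_smul, hcast, cpow_sq_eq s hs0 (u - 1)]
    have h2u : 2 * (u - 1) = (k : ℂ) - 1 := by
      simp only [hu_def]; ring
    rw [h2u]
    have hne' : (s : ℂ) ≠ 0 := by exact_mod_cast hs0.ne'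
    have : ((2 * s : ℝ) : ℂ) * ((s:ℂ) ^ ((k:ℂ) - 1) * ((1 - s ^ 2 : ℝ) : ℂ) ^ (c - 1))
        = 2 * (((s:ℂ) ^ ((k:ℂ) - 1) * (s:ℂ) ^ (1:ℂ)) * ((1 - s ^ 2 : ℝ) : ℂ) ^ (c - 1)) := by
      rw [Complex.cpow_one]; push_cast; ring
    rw [this, ← Complex.cpow_add _ _ hne']
    norm_num
  -- the beta integrand, integrable on Ioo 0 1
  have hbeta : IntegrableOn (fun x : ℝ => (x:ℂ) ^ (u - 1) * (1 - (x:ℂ)) ^ (c - 1)) (Ioo 0 1) := by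
    have := Complex.betaIntegral_convergent hu hc
    rw [intervalIntegrable_iff_integrableOn_Ioc_of_le zero_le_one] at this
    exact this.mono_set Ioo_subset_Ioc_self
  constructor
  · have h1 : IntegrableOn (fun x : ℝ => (x:ℂ) ^ (u - 1) * (1 - (x:ℂ)) ^ (c - 1))
        ((fun s : ℝ => s ^ 2) '' Ioo 0 1) := by rwa [sq_image_Ioo]
    rw [integrableOn_image_iff_integrableOn_abs_deriv_smul measurableSet_Ioo hder
      sq_injOn_Ioo] at h1
    have h2 : IntegrableOn
        (fun s : ℝ => (2⁻¹ : ℂ) * (|2 * s| •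
          (((s ^ 2 : ℝ) : ℂ) ^ (u - 1) * (1 - ((s ^ 2 : ℝ) : ℂ)) ^ (c - 1)))) (Ioo 0 1) :=
      h1.const_mul (2⁻¹ : ℂ)
    refine h2.congr_fun (fun s hs => ?_) measurableSet_Ioo
    beta_reduce
    rw [hpt s hs]
    ring
  · have hval : ∫ x in Ioo (0:ℝ) 1, (x:ℂ) ^ (u - 1) * (1 - (x:ℂ)) ^ (c - 1)
        = Complex.Gamma u * Complex.Gamma c / Complex.Gamma (u + c) := by
      rw [Measure.restrict_congr_set MeasureTheory.Ioo_ae_eq_Ioc,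
        ← intervalIntegral.integral_of_le zero_le_one]
      have h := Complex.Gamma_mul_Gamma_eq_betaIntegral hu hc
      have hne : Complex.Gamma (u + c) ≠ 0 :=
        Complex.Gamma_ne_zero_of_re_pos (by rw [add_re]; positivity)
      rw [Complex.betaIntegral] at h
      field_simp
      linear_combination -h
    have hcov := integral_image_eq_integral_abs_deriv_smul measurableSet_Ioo hder sq_injOn_Ioo
      (fun x : ℝ => (x:ℂ) ^ (u - 1) * (1 - (x:ℂ)) ^ (c - 1))
    rw [sq_image_Ioo, hval] at hcov
    have h3 : ∫ s in Ioo (0:ℝ) 1,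
        |2 * s| • (((s ^ 2 : ℝ) : ℂ) ^ (u - 1) * (1 - ((s ^ 2 : ℝ) : ℂ)) ^ (c - 1))
        = ∫ s in Ioo (0:ℝ) 1, 2 * ((s:ℂ) ^ k * ((1 - s ^ 2 : ℝ) : ℂ) ^ (c - 1)) :=
      setIntegral_congr_fun measurableSet_Ioo (fun s hs => hpt s hs)
    rw [h3, MeasureTheory.integral_const_mul] at hcov
    have hfin : ∫ s in Ioo (0:ℝ) 1, (s:ℂ) ^ k * ((1 - s ^ 2 : ℝ) : ℂ) ^ (c - 1)
        = Complex.Gamma u * Complex.Gamma c / Complex.Gamma (u + c) / 2 := by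
      rw [eq_div_iff (two_ne_zero' ℂ)]
      linear_combination -hcov
    rw [hfin]
    ring
open MeasureTheory Complex Set


section Aux
variable {η : ℂ}

lemma half_re (k : ℕ) : ((((k:ℂ)) + 1) / 2).re = ((k:ℝ) + 1) / 2 := by
  rw [show ((k:ℂ) + 1) / 2 = ((((k:ℝ) + 1) / 2 : ℝ) : ℂ) by push_cast; ring, Complex.ofReal_re]

lemma hc_re (hη : -1 < η.re) : 0 < (η + 3/2 : ℂ).re := by
  rw [Complex.add_re, show ((3:ℂ)/2).re = 3/2 by norm_num]
  linarith

lemma exp_ts_norm (t : ℂ) {s : ℝ} (hs0 : 0 ≤ s) (hs1 : s ≤ 1) :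
    ‖Complex.exp (t * s)‖ ≤ Real.exp |t.re| := by
  rw [Complex.norm_exp]
  apply Real.exp_le_exp.2
  have : (t * (s:ℂ)).re = t.re * s := by
    simp [Complex.mul_re]
  rw [this]
  calc t.re * s ≤ |t.re| * s := mul_le_mul_of_nonneg_right (le_abs_self _) hs0
    _ ≤ |t.re| * 1 := mul_le_mul_of_nonneg_left hs1 (abs_nonneg _)
    _ = |t.re| := mul_one _
end Aux

lemma gamma_alg (G A D F K e t T : ℂ) (hG : G ≠ 0) (hD : D ≠ 0) (hF : F ≠ 0) (hK : K ≠ 0)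
    (hz : K / 2 + e + 1 ≠ 0) :
    2 / G * ((e + 1) * (T * t / (K * F)) * (A * G / (2 * ((K / 2 + e + 1) * D))) +
      t / 2 * (T / F) * (A * G / (2 * ((K / 2 + e + 1) * D)))) = T * t * A / (K * F * D) := by
  set z : ℂ := K / 2 + e + 1 with hz_def
  have e1 : t / 2 * (T / F) = T * t / (K * F) * (K / 2) := by
    rw [div_mul_div_comm, ← mul_div_mul_left (t * T) (2 * F) hK, div_mul_div_comm]
    ring
  have e2 : (e + 1) * (T * t / (K * F)) + T * t / (K * F) * (K / 2)
      = T * t / (K * F) * z := by rw [hz_def]; ring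
  have e3 : A * G / (2 * (z * D)) * z = A * G / (2 * D) := by
    rw [div_mul_eq_mul_div, show (2:ℂ) * (z * D) = z * (2 * D) from by ring,
      show A * G * z = z * (A * G) from by ring, mul_div_mul_left _ _ hz]
  have e4 : 2 / G * (A * G / (2 * D)) = A / D := by
    rw [div_mul_div_comm, show (2:ℂ) * (A * G) = G * (2 * A) from by ring,
      show G * (2 * D) = G * (2 * D) from rfl, mul_div_mul_left _ _ hG,
      mul_div_mul_left _ _ (two_ne_zero' ℂ)]
  calc 2 / G * ((e + 1) * (T * t / (K * F)) * (A * G / (2 * (z * D))) +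
        t / 2 * (T / F) * (A * G / (2 * (z * D))))
      = 2 / G * (A * G / (2 * (z * D)) * ((e + 1) * (T * t / (K * F)) + t / 2 * (T / F))) := by
        ring
    _ = 2 / G * (A * G / (2 * (z * D)) * (T * t / (K * F) * z)) := by rw [e1, e2]
    _ = 2 / G * (A * G / (2 * (z * D)) * z * (T * t / (K * F))) := by ring
    _ = 2 / G * (A * G / (2 * D)) * (T * t / (K * F)) := by rw [e3]; ring
    _ = A / D * (T * t / (K * F)) := by rw [e4]
    _ = T * t * A / (K * F * D) := by rw [div_mul_div_comm]; ring

set_option maxHeartbeats 1000000 in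
theorem besselStruve_eq_integral {η : ℂ} (hη : -1 < η.re) (t : ℂ) :
    besselStruve η t = (2 * Complex.Gamma (η + 1) /
        ((Real.sqrt Real.pi : ℂ) * Complex.Gamma (η + 3/2))) *
      ∫ s in Ioo (0:ℝ) 1, ((η + 1) + t * s / 2) * Complex.exp (t * s) *
        ((1 - s ^ 2 : ℝ) : ℂ) ^ (η + 1/2) := by
  set c : ℂ := η + 3/2 with hc_def
  have hc : 0 < c.re := hc_re hη
  have hexp : η + 1/2 = c - 1 := by rw [hc_def]; ring
  set w : ℝ → ℂ := fun s => ((1 - s ^ 2 : ℝ) : ℂ) ^ (η + 1/2) with hw_def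
  -- moments
  have hmom : ∀ k : ℕ, IntegrableOn (fun s : ℝ => (s:ℂ) ^ k * w s) (Ioo 0 1) ∧
      ∫ s in Ioo (0:ℝ) 1, (s:ℂ) ^ k * w s
        = Complex.Gamma (((k:ℂ) + 1) / 2) * Complex.Gamma c /
            (2 * Complex.Gamma (((k:ℂ) + 1) / 2 + c)) := by
    intro k
    simpa only [hw_def, hexp] using bs_moment hc k
  have hWint : IntegrableOn w (Ioo 0 1) := by
    have := (hmom 0).1
    simpa using this
  have hWnn : 0 ≤ ∫ s in Ioo (0:ℝ) 1, ‖w s‖ := integral_nonneg fun s => norm_nonneg _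
  set Wr : ℝ := ∫ s in Ioo (0:ℝ) 1, ‖w s‖ with hWr_def
  -- the two families
  set F1 : ℕ → ℝ → ℂ := fun m s => ((η + 1) * (t ^ m / m.factorial)) * ((s:ℂ) ^ m * w s)
    with hF1_def
  set F2 : ℕ → ℝ → ℂ := fun m s => ((t / 2) * (t ^ m / m.factorial)) * ((s:ℂ) ^ (m+1) * w s)
    with hF2_def
  -- norms of integrals bounds
  have hnormint : ∀ (C : ℂ) (m k : ℕ),
      ∫ s in Ioo (0:ℝ) 1, ‖(C * (t ^ m / m.factorial)) * ((s:ℂ) ^ k * w s)‖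
        ≤ ‖C‖ * (‖t‖ ^ m / m.factorial) * Wr := by
    intro C m k
    have heq : ∀ s ∈ Ioo (0:ℝ) 1,
        ‖(C * (t ^ m / m.factorial)) * ((s:ℂ) ^ k * w s)‖
          = (‖C‖ * (‖t‖ ^ m / m.factorial)) * ‖(s:ℂ) ^ k * w s‖ := by
      intro s _
      rw [norm_mul, norm_mul, norm_div, norm_pow]
      norm_num
    rw [setIntegral_congr_fun measurableSet_Ioo heq, MeasureTheory.integral_const_mul]
    apply mul_le_mul_of_nonneg_left _ (by positivity)
    apply setIntegral_mono_on ((hmom k).1.norm) hWint.norm measurableSet_Ioo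
    intro s hs
    rw [norm_mul, norm_pow]
    have h1 : ‖(s:ℂ)‖ ^ k ≤ 1 := by
      apply pow_le_one₀ (norm_nonneg _)
      rw [Complex.norm_real, Real.norm_eq_abs, abs_of_pos hs.1]
      exact hs.2.le
    calc ‖(s:ℂ)‖ ^ k * ‖w s‖ ≤ 1 * ‖w s‖ :=
          mul_le_mul_of_nonneg_right h1 (norm_nonneg _)
      _ = ‖w s‖ := one_mul _
  have hsummable : ∀ C : ℂ, Summable (fun m : ℕ => ‖C‖ * (‖t‖ ^ m / m.factorial) * Wr) := by
    intro C
    exact ((Real.summable_pow_div_factorial ‖t‖).mul_left ‖C‖).mul_right Wr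
  -- HasSum for family 1
  have h1sum : HasSum (fun m => ∫ s in Ioo (0:ℝ) 1, F1 m s)
      (∫ s in Ioo (0:ℝ) 1, ∑' m, F1 m s) := by
    apply hasSum_integral_of_summable_integral_norm
    · intro m; exact ((hmom m).1.const_mul _)
    · apply Summable.of_nonneg_of_le (fun m => integral_nonneg fun s => norm_nonneg _)
        (fun m => hnormint (η+1) m m) (hsummable (η+1))
  have h2sum : HasSum (fun m => ∫ s in Ioo (0:ℝ) 1, F2 m s)
      (∫ s in Ioo (0:ℝ) 1, ∑' m, F2 m s) := by
    apply hasSum_integral_of_summable_integral_norm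
    · intro m; exact ((hmom (m+1)).1.const_mul _)
    · apply Summable.of_nonneg_of_le (fun m => integral_nonneg fun s => norm_nonneg _)
        (fun m => hnormint (t/2) m (m+1)) (hsummable (t/2))
  have hexp_tsum : ∀ z : ℂ, (∑' m : ℕ, z ^ m / (m.factorial : ℂ)) = Complex.exp z := by
    intro z; rw [Complex.exp_eq_exp_ℂ, NormedSpace.exp_eq_tsum_div]
  -- pointwise tsums
  have hts1 : ∀ s ∈ Ioo (0:ℝ) 1, (∑' m, F1 m s)
      = ((η + 1) * Complex.exp (t * s)) * w s := by
    intro s _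
    have h1 : ∀ m : ℕ, F1 m s = ((t * s) ^ m / m.factorial) * ((η + 1) * w s) := by
      intro m; simp only [hF1_def]; rw [mul_pow]; ring
    rw [tsum_congr h1, tsum_mul_right]
    have h2 : (∑' m : ℕ, (t * (s:ℂ)) ^ m / (m.factorial : ℂ)) = Complex.exp (t * s) :=
      hexp_tsum _
    rw [h2]; ring
  have hts2 : ∀ s ∈ Ioo (0:ℝ) 1, (∑' m, F2 m s)
      = ((t / 2) * ((s:ℂ) * Complex.exp (t * s))) * w s := by
    intro s _
    have h1 : ∀ m : ℕ, F2 m s = ((t * s) ^ m / m.factorial) * ((t / 2) * ((s:ℂ) * w s)) := by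
      intro m; simp only [hF2_def]; rw [pow_succ, mul_pow]; ring
    rw [tsum_congr h1, tsum_mul_right]
    have h2 : (∑' m : ℕ, (t * (s:ℂ)) ^ m / (m.factorial : ℂ)) = Complex.exp (t * s) :=
      hexp_tsum _
    rw [h2]; ring
  rw [setIntegral_congr_fun measurableSet_Ioo hts1] at h1sum
  rw [setIntegral_congr_fun measurableSet_Ioo hts2] at h2sum
  set I1 : ℂ := ∫ s in Ioo (0:ℝ) 1, ((η + 1) * Complex.exp (t * s)) * w s with hI1_def
  set I2 : ℂ := ∫ s in Ioo (0:ℝ) 1, ((t / 2) * ((s:ℂ) * Complex.exp (t * s))) * w s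
    with hI2_def
  -- closed forms for the termwise integrals
  set c1 : ℕ → ℂ := fun m => ((η + 1) * (t ^ m / m.factorial)) *
      (Complex.Gamma (((m:ℂ) + 1) / 2) * Complex.Gamma c /
        (2 * Complex.Gamma (((m:ℂ) + 1) / 2 + c))) with hc1_def
  set c2 : ℕ → ℂ := fun m => ((t / 2) * (t ^ m / m.factorial)) *
      (Complex.Gamma (((m:ℂ) + 2) / 2) * Complex.Gamma c /
        (2 * Complex.Gamma (((m:ℂ) + 2) / 2 + c))) with hc2_def
  have hG1 : (fun m => ∫ s in Ioo (0:ℝ) 1, F1 m s) = c1 := by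
    funext m
    simp only [hF1_def, hc1_def]
    rw [MeasureTheory.integral_const_mul, (hmom m).2]
  have hG2 : (fun m => ∫ s in Ioo (0:ℝ) 1, F2 m s) = c2 := by
    funext m
    simp only [hF2_def, hc2_def]
    have hcast : (((m+1:ℕ):ℂ) + 1) / 2 = ((m:ℂ) + 2) / 2 := by push_cast; ring
    rw [MeasureTheory.integral_const_mul, (hmom (m+1)).2, hcast]
  rw [hG1] at h1sum
  rw [hG2] at h2sum
  have hH : HasSum (shift0 c2) I2 := hasSum_shift0 h2sum
  have hsumC : HasSum (fun m => (2 / Complex.Gamma c) * (c1 m + shift0 c2 m))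
      ((2 / Complex.Gamma c) * (I1 + I2)) := (h1sum.add hH).mul_left _
  -- identify with the Bessel-Struve summand
  have hΓc : Complex.Gamma c ≠ 0 := Complex.Gamma_ne_zero_of_re_pos hc
  have hη1 : (η + 1 : ℂ) ≠ 0 := by
    intro h
    have := congrArg Complex.re h
    rw [Complex.add_re, Complex.one_re, Complex.zero_re] at this
    linarith
  have hΓη1 : Complex.Gamma (η + 1) ≠ 0 := by
    apply Complex.Gamma_ne_zero_of_re_pos
    rw [Complex.add_re, Complex.one_re]; linarith
  have hTeq : (fun m : ℕ => (2 / Complex.Gamma c) * (c1 m + shift0 c2 m))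
      = fun m : ℕ => t ^ m * Complex.Gamma (((m:ℂ) + 1) / 2) /
          ((m.factorial : ℂ) * Complex.Gamma ((m:ℂ) / 2 + η + 1)) := by
    funext m
    cases m with
    | zero =>
      simp only [shift0, hc1_def]
      have e1 : (((0:ℕ):ℂ) + 1) / 2 = 1/2 := by norm_num
      have e2 : (1/2 : ℂ) + c = η + 2 := by rw [hc_def]; ring
      have e3 : ((0:ℕ):ℂ) / 2 + η + 1 = η + 1 := by norm_num
      have hrec : Complex.Gamma (η + 2) = (η + 1) * Complex.Gamma (η + 1) := by
        rw [show (η + 2 : ℂ) = (η + 1) + 1 by ring, Complex.Gamma_add_one _ hη1]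
      have hΓη2 : Complex.Gamma (η + 2) ≠ 0 := by
        apply Complex.Gamma_ne_zero_of_re_pos
        rw [Complex.add_re, show ((2:ℂ)).re = 2 by norm_num]; linarith
      rw [e1, e2, e3]
      rw [hrec]
      simp only [pow_zero, Nat.factorial_zero, Nat.cast_one]
      field_simp
      ring
    | succ k =>
      simp only [shift0, hc1_def, hc2_def]
      have hzre : 0 < (((k:ℂ) + 1) / 2 + η + 1).re := by
        rw [Complex.add_re, Complex.add_re, half_re, Complex.one_re]
        have : (0:ℝ) ≤ ((k:ℝ) + 1) / 2 := by positivity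
        linarith
      have hz : (((k:ℂ) + 1) / 2 + η + 1) ≠ 0 := by
        intro h; rw [h] at hzre; simp at hzre
      have hD : Complex.Gamma (((k:ℂ) + 1) / 2 + η + 1) ≠ 0 :=
        Complex.Gamma_ne_zero_of_re_pos hzre
      have hrec : Complex.Gamma (((k:ℂ) + 1 + 1) / 2 + c)
          = (((k:ℂ) + 1) / 2 + η + 1) * Complex.Gamma (((k:ℂ) + 1) / 2 + η + 1) := by
        rw [show ((k:ℂ) + 1 + 1) / 2 + c = (((k:ℂ) + 1) / 2 + η + 1) + 1 by
          rw [hc_def]; ring, Complex.Gamma_add_one _ hz]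
      have hfac : ((k+1).factorial : ℂ) = ((k:ℂ) + 1) * (k.factorial : ℂ) := by
        rw [Nat.factorial_succ]; push_cast; ring
      have hfacne : (k.factorial : ℂ) ≠ 0 := by
        exact_mod_cast Nat.cast_ne_zero.mpr k.factorial_ne_zero
      have hk1ne : ((k:ℂ) + 1) ≠ 0 := Nat.cast_add_one_ne_zero k
      push_cast
      simp only [show ((k:ℂ) + 1 + 1) / 2 = ((k:ℂ) + 2) / 2 from by ring,
        show ((k:ℂ) + 2) / 2 + c = ((k:ℂ) + 1) / 2 + η + 1 + 1 from by rw [hc_def]; ring]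
      rw [Complex.Gamma_add_one _ hz, hfac, pow_succ]
      exact gamma_alg (Complex.Gamma c) (Complex.Gamma (((k:ℂ) + 2) / 2))
        (Complex.Gamma (((k:ℂ) + 1) / 2 + η + 1)) (k.factorial : ℂ) ((k:ℂ) + 1) η t (t ^ k)
        hΓc hD hfacne hk1ne hz
  have htsum : (∑' m : ℕ, t ^ m * Complex.Gamma (((m:ℂ) + 1) / 2) /
      ((m.factorial : ℂ) * Complex.Gamma ((m:ℂ) / 2 + η + 1)))
      = (2 / Complex.Gamma c) * (I1 + I2) := by
    rw [← hTeq]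
    exact hsumC.tsum_eq
  rw [besselStruve, htsum]
  -- integrability of the two pieces
  have hInt1 : IntegrableOn (fun s : ℝ => ((η + 1) * Complex.exp (t * s)) * w s) (Ioo 0 1) := by
    apply Integrable.mono' (hWint.norm.const_mul (‖η + 1‖ * Real.exp |t.re|))
    · exact ((continuous_const.mul
        (Complex.continuous_exp.comp (continuous_const.mul
          Complex.continuous_ofReal))).aestronglyMeasurable).mul hWint.1
    · rw [ae_restrict_iff' measurableSet_Ioo]
      filter_upwards with s hs
      rw [norm_mul, norm_mul]
      have h0 := exp_ts_norm t hs.1.le hs.2.le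
      exact mul_le_mul_of_nonneg_right
        (mul_le_mul_of_nonneg_left h0 (norm_nonneg _)) (norm_nonneg _)
  have hInt2 : IntegrableOn
      (fun s : ℝ => ((t / 2) * ((s:ℂ) * Complex.exp (t * s))) * w s) (Ioo 0 1) := by
    apply Integrable.mono' (hWint.norm.const_mul (‖t / 2‖ * Real.exp |t.re|))
    · exact ((continuous_const.mul
        (Complex.continuous_ofReal.mul
          (Complex.continuous_exp.comp (continuous_const.mul
            Complex.continuous_ofReal)))).aestronglyMeasurable).mul hWint.1
    · rw [ae_restrict_iff' measurableSet_Ioo]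
      filter_upwards with s hs
      rw [norm_mul, norm_mul, norm_mul]
      have h1 : ‖(s:ℂ)‖ ≤ 1 := by
        rw [Complex.norm_real, Real.norm_eq_abs, abs_of_pos hs.1]; exact hs.2.le
      have h2 := exp_ts_norm t hs.1.le hs.2.le
      have h3 : ‖(s:ℂ)‖ * ‖Complex.exp (t * s)‖ ≤ Real.exp |t.re| := by
        calc ‖(s:ℂ)‖ * ‖Complex.exp (t * s)‖ ≤ 1 * Real.exp |t.re| :=
              mul_le_mul h1 h2 (norm_nonneg _) zero_le_one
          _ = Real.exp |t.re| := one_mul _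
      exact mul_le_mul_of_nonneg_right
        (mul_le_mul_of_nonneg_left h3 (norm_nonneg _)) (norm_nonneg _)
  have hIadd : (∫ s in Ioo (0:ℝ) 1, ((η + 1) + t * s / 2) * Complex.exp (t * s) * w s)
      = I1 + I2 := by
    rw [hI1_def, hI2_def, ← integral_add hInt1 hInt2]
    refine setIntegral_congr_fun measurableSet_Ioo (fun s _ => ?_)
    ring
  have hIadd' : (∫ s in Ioo (0:ℝ) 1, ((η + 1) + t * s / 2) * Complex.exp (t * s) *
      ((1 - s ^ 2 : ℝ) : ℂ) ^ (η + 1/2)) = I1 + I2 := hIadd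
  rw [hIadd']
  have hπ : ((Real.sqrt Real.pi : ℝ) : ℂ) ≠ 0 :=
    Complex.ofReal_ne_zero.mpr (ne_of_gt (Real.sqrt_pos.mpr Real.pi_pos))
  field_simp

noncomputable def bsB (η p : ℂ) : ℝ := ‖η + 1‖ + ‖p‖ / (2 * Real.exp 1 * p.re)

noncomputable def bsK (η : ℂ) : ℝ :=
  ‖2 * Complex.Gamma (η + 1) / ((Real.sqrt Real.pi : ℂ) * Complex.Gamma (η + 3/2))‖

noncomputable def bsWr (η : ℂ) : ℝ := ∫ s in Ioo (0:ℝ) 1, ‖((1 - s ^ 2 : ℝ) : ℂ) ^ (η + 1/2)‖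

lemma bs_ptBound {η p : ℂ} (hp : 0 < p.re) {u : ℝ} (hu : 0 < u) {s : ℝ}
    (hs : s ∈ Ioo (0:ℝ) 1) :
    ‖((η + 1) + (-p/(u:ℂ)) * s / 2) * Complex.exp ((-p/(u:ℂ)) * s) *
        ((1 - s ^ 2 : ℝ) : ℂ) ^ (η + 1/2)‖
      ≤ bsB η p * ‖((1 - s ^ 2 : ℝ) : ℂ) ^ (η + 1/2)‖ := by
  set t : ℂ := -p / (u:ℂ) with ht_def
  have htre : t.re = -(p.re / u) := by
    rw [ht_def, Complex.div_ofReal_re, Complex.neg_re, neg_div]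
  have htnorm : ‖t‖ = ‖p‖ / u := by
    rw [ht_def, norm_div, norm_neg, Complex.norm_real, Real.norm_eq_abs, abs_of_pos hu]
  set a : ℝ := p.re / u with ha_def
  have ha : 0 < a := div_pos hp hu
  rw [norm_mul]
  apply mul_le_mul_of_nonneg_right _ (norm_nonneg _)
  rw [norm_mul]
  have h1 : ‖(η + 1) + t * s / 2‖ ≤ ‖η + 1‖ + ‖t‖ * s / 2 := by
    refine (norm_add_le _ _).trans ?_
    apply add_le_add le_rfl
    rw [norm_div, norm_mul, Complex.norm_real, Real.norm_eq_abs, abs_of_pos hs.1]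
    norm_num
  have h2 : ‖Complex.exp (t * s)‖ = Real.exp (-(a * s)) := by
    rw [Complex.norm_exp]
    congr 1
    have : (t * (s:ℂ)).re = t.re * s := by simp [Complex.mul_re]
    rw [this, htre]; ring
  rw [h2]
  have hexp_le_one : Real.exp (-(a * s)) ≤ 1 := by
    rw [Real.exp_le_one_iff]
    have : 0 ≤ a * s := mul_nonneg ha.le hs.1.le
    linarith
  calc ‖(η + 1) + t * s / 2‖ * Real.exp (-(a * s))
      ≤ (‖η + 1‖ + ‖t‖ * s / 2) * Real.exp (-(a * s)) :=
        mul_le_mul_of_nonneg_right h1 (Real.exp_pos _).le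
    _ = ‖η + 1‖ * Real.exp (-(a * s)) + (‖t‖ / (2 * a)) * (a * s * Real.exp (-(a * s))) := by
        field_simp
    _ ≤ ‖η + 1‖ * 1 + (‖t‖ / (2 * a)) * (Real.exp 1)⁻¹ := by
        apply add_le_add
        · exact mul_le_mul_of_nonneg_left hexp_le_one (norm_nonneg _)
        · exact mul_le_mul_of_nonneg_left (xexp_le (a * s)) (by positivity)
    _ = ‖η + 1‖ + ‖t‖ / (2 * a * Real.exp 1) := by
        rw [mul_one]
        congr 1
        rw [div_mul_eq_mul_div, ← div_eq_mul_inv, div_div,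
          show Real.exp 1 * (2 * a) = 2 * a * Real.exp 1 from by ring]
    _ = bsB η p := by
        rw [bsB, htnorm, ha_def]
        congr 1
        rw [eq_div_iff (by positivity)]
        field_simp

lemma bsW_int {η : ℂ} (hη : -1 < η.re) :
    IntegrableOn (fun s : ℝ => ((1 - s ^ 2 : ℝ) : ℂ) ^ (η + 1/2)) (Ioo 0 1) := by
  have h := (bs_moment (hc_re hη) 0).1
  have he : η + 1/2 = η + 3/2 - 1 := by ring
  rw [he]
  refine h.congr_fun (fun s _ => by simp only [pow_zero, one_mul]) measurableSet_Ioo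

lemma besselStruve_ray_bound {η : ℂ} (hη : -1 < η.re) {p : ℂ} (hp : 0 < p.re) {u : ℝ}
    (hu : 0 < u) :
    ‖besselStruve η (-p / (u:ℂ))‖ ≤ bsK η * (bsB η p * bsWr η) := by
  rw [besselStruve_eq_integral hη, norm_mul]
  rw [show ‖2 * Complex.Gamma (η + 1) / ((Real.sqrt Real.pi : ℂ) * Complex.Gamma (η + 3/2))‖
    = bsK η from rfl]
  apply mul_le_mul_of_nonneg_left _ (norm_nonneg _)
  have hint : Integrable (fun s : ℝ => bsB η p * ‖((1 - s ^ 2 : ℝ) : ℂ) ^ (η + 1/2)‖)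
      (volume.restrict (Ioo 0 1)) := (bsW_int hη).norm.const_mul _
  refine le_trans (MeasureTheory.norm_integral_le_of_norm_le hint ?_) ?_
  · rw [ae_restrict_iff' measurableSet_Ioo]
    filter_upwards with s hs
    exact bs_ptBound hp hu hs
  · rw [MeasureTheory.integral_const_mul, bsWr]

lemma besselStruve_ray_contOn {η p : ℂ} (hη : -1 < η.re) (hp : 0 < p.re) :
    ContinuousOn (fun u : ℝ => besselStruve η (-p / (u:ℂ))) (Ioo 0 1) := by
  have C := 2 * Complex.Gamma (η + 1) / ((Real.sqrt Real.pi : ℂ) * Complex.Gamma (η + 3/2))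
  apply ContinuousOn.congr (f := fun u : ℝ =>
    (2 * Complex.Gamma (η + 1) / ((Real.sqrt Real.pi : ℂ) * Complex.Gamma (η + 3/2))) *
    ∫ s in Ioo (0:ℝ) 1, ((η + 1) + (-p / (u:ℂ)) * s / 2) * Complex.exp ((-p / (u:ℂ)) * s) *
      ((1 - s ^ 2 : ℝ) : ℂ) ^ (η + 1/2))
    (s := Ioo 0 1)
  · apply ContinuousOn.mul continuousOn_const
    intro u₀ hu₀
    apply ContinuousAt.continuousWithinAt
    apply MeasureTheory.continuousAt_of_dominated (bound := fun s =>
      bsB η p * ‖((1 - s ^ 2 : ℝ) : ℂ) ^ (η + 1/2)‖)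
    · filter_upwards with u
      exact ((((continuous_const.add ((continuous_const.mul
          Complex.continuous_ofReal).div_const 2)).mul
          (Complex.continuous_exp.comp (continuous_const.mul
          Complex.continuous_ofReal)))).aestronglyMeasurable).mul (bsW_int hη).1
    · filter_upwards [isOpen_Ioo.eventually_mem hu₀] with u hu
      rw [ae_restrict_iff' measurableSet_Ioo]
      filter_upwards with s hs
      exact bs_ptBound hp hu.1 hs
    · exact (bsW_int hη).norm.const_mul _
    · filter_upwards with s
      have hne : ((u₀ : ℝ) : ℂ) ≠ 0 := Complex.ofReal_ne_zero.mpr hu₀.1.ne'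
      have hquot : ContinuousAt (fun u : ℝ => -p / (u:ℂ)) u₀ :=
        ContinuousAt.div continuousAt_const Complex.continuous_ofReal.continuousAt hne
      exact ((continuousAt_const.add ((hquot.mul continuousAt_const).div_const 2)).mul
        (Complex.continuous_exp.continuousAt.comp (hquot.mul continuousAt_const))).mul
        continuousAt_const
  · intro u _
    exact besselStruve_eq_integral hη _

set_option maxHeartbeats 1000000 in
theorem extPhi_integral_repr (ξ₂ ξ₃ p q η x : ℂ)
    (h1 : 0 < ξ₂.re) (h2 : ξ₂.re < ξ₃.re) (hp : 0 < p.re) (hq : 0 < q.re)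
    (hη : -1 < η.re) :
    extPhi η p q ξ₂ ξ₃ x =
      (1 / Complex.betaIntegral ξ₂ (ξ₃ - ξ₂)) *
        ∫ y in (0:ℝ)..1,
          (y : ℂ) ^ (ξ₂ - 1) * ((1 : ℂ) - (y : ℂ)) ^ (ξ₃ - ξ₂ - 1) *
            Complex.exp (x * (y : ℂ)) *
            besselStruve η (-p / (y : ℂ)) * besselStruve η (-q / (1 - (y : ℂ))) := by
  set d : ℂ := ξ₃ - ξ₂ with hd_def
  have hd : 0 < d.re := by rw [hd_def, Complex.sub_re]; linarith
  set Sp : ℝ → ℂ := fun y => besselStruve η (-p / (y:ℂ)) with hSp_def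
  set Sq : ℝ → ℂ := fun y => besselStruve η (-q / (1 - (y:ℂ))) with hSq_def
  have hSq_eq : ∀ y : ℝ, Sq y = besselStruve η (-q / ((1 - y : ℝ) : ℂ)) := by
    intro y; rw [hSq_def]; push_cast; ring_nf
  -- continuity
  have hSpCont : ContinuousOn Sp (Ioo 0 1) := besselStruve_ray_contOn hη hp
  have hSqCont : ContinuousOn Sq (Ioo 0 1) := by
    have hmaps : MapsTo (fun y : ℝ => 1 - y) (Ioo 0 1) (Ioo 0 1) := by
      intro y hy
      simp only [Set.mem_Ioo] at hy ⊢
      constructor <;> [linarith [hy.2]; linarith [hy.1]]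
    have h := (besselStruve_ray_contOn hη hq).comp
      ((continuous_const.sub continuous_id).continuousOn) hmaps
    refine h.congr fun y _ => ?_
    rw [hSq_eq y]
    rfl
  -- bounds
  set Mp : ℝ := bsK η * (bsB η p * bsWr η) with hMp_def
  set Mq : ℝ := bsK η * (bsB η q * bsWr η) with hMq_def
  have hMp : ∀ y ∈ Ioo (0:ℝ) 1, ‖Sp y‖ ≤ Mp := fun y hy =>
    besselStruve_ray_bound hη hp hy.1
  have hMq : ∀ y ∈ Ioo (0:ℝ) 1, ‖Sq y‖ ≤ Mq := by
    intro y hy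
    rw [hSq_eq y]
    exact besselStruve_ray_bound hη hq (by linarith [hy.2])
  have hmem : (1/2 : ℝ) ∈ Ioo (0:ℝ) 1 := by norm_num
  have hMp0 : 0 ≤ Mp := (norm_nonneg _).trans (hMp _ hmem)
  have hMq0 : 0 ≤ Mq := (norm_nonneg _).trans (hMq _ hmem)
  -- beta weight
  set β : ℝ → ℂ := fun y => (y:ℂ) ^ (ξ₂ - 1) * ((1:ℂ) - (y:ℂ)) ^ (d - 1) with hβ_def
  have hβint : IntegrableOn β (Ioo 0 1) := by
    have := Complex.betaIntegral_convergent h1 hd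
    rw [intervalIntegrable_iff_integrableOn_Ioc_of_le zero_le_one] at this
    exact this.mono_set Ioo_subset_Ioc_self
  set g₀ : ℝ → ℂ := fun y => (y:ℂ) ^ (ξ₂ - 1) * ((1:ℂ) - (y:ℂ)) ^ (d - 1) * Sp y * Sq y
    with hg₀_def
  have hβCont : ContinuousOn β (Ioo 0 1) := by
    apply ContinuousOn.mul
    · intro y hy
      apply ContinuousAt.continuousWithinAt
      refine (continuousAt_cpow_const ?_).comp Complex.continuous_ofReal.continuousAt
      rw [Complex.mem_slitPlane_iff]
      exact Or.inl (by simpa using hy.1)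
    · intro y hy
      apply ContinuousAt.continuousWithinAt
      apply ContinuousAt.comp (g := fun z : ℂ => z ^ (d-1))
      · apply continuousAt_cpow_const
        rw [Complex.mem_slitPlane_iff]
        exact Or.inl (by simpa using (by linarith [hy.2] : (0:ℝ) < 1 - y))
      · exact (continuous_const.sub Complex.continuous_ofReal).continuousAt
  have hg₀Cont : ContinuousOn g₀ (Ioo 0 1) := (hβCont.mul hSpCont).mul hSqCont
  have hg₀meas : AEStronglyMeasurable g₀ (volume.restrict (Ioo 0 1)) :=
    hg₀Cont.aestronglyMeasurable measurableSet_Ioo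
  have hg₀bound : ∀ y ∈ Ioo (0:ℝ) 1, ‖g₀ y‖ ≤ Mp * Mq * ‖β y‖ := by
    intro y hy
    have : ‖g₀ y‖ = ‖β y‖ * ‖Sp y‖ * ‖Sq y‖ := by
      rw [hg₀_def, hβ_def]; simp only [norm_mul]
    rw [this]
    calc ‖β y‖ * ‖Sp y‖ * ‖Sq y‖ ≤ ‖β y‖ * Mp * Mq := by
          apply mul_le_mul (mul_le_mul_of_nonneg_left (hMp y hy) (norm_nonneg _))
            (hMq y hy) (norm_nonneg _) (mul_nonneg (norm_nonneg _) hMp0)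
      _ = Mp * Mq * ‖β y‖ := by ring
  have hg₀int : IntegrableOn g₀ (Ioo 0 1) := by
    apply Integrable.mono' (hβint.norm.const_mul (Mp * Mq)) hg₀meas
    rw [ae_restrict_iff' measurableSet_Ioo]
    filter_upwards with y hy
    exact hg₀bound y hy
  -- the series of functions
  set F : ℕ → ℝ → ℂ := fun l y => (x ^ l / l.factorial) * ((y:ℂ) ^ l * g₀ y) with hF_def
  have hFmeas : ∀ l : ℕ, AEStronglyMeasurable (F l) (volume.restrict (Ioo 0 1)) := by
    intro l
    exact ((Complex.continuous_ofReal.pow l).aestronglyMeasurable.mul hg₀meas).const_mul _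
  have hFbound : ∀ l : ℕ, ∀ y ∈ Ioo (0:ℝ) 1, ‖F l y‖ ≤ ‖x‖ ^ l / l.factorial * ‖g₀ y‖ := by
    intro l y hy
    rw [hF_def]
    simp only [norm_mul, norm_div, norm_pow, Complex.norm_natCast]
    have hyn : ‖(y:ℂ)‖ ≤ 1 := by
      rw [Complex.norm_real, Real.norm_eq_abs, abs_of_pos hy.1]; exact hy.2.le
    have : ‖(y:ℂ)‖ ^ l * ‖g₀ y‖ ≤ 1 * ‖g₀ y‖ :=
      mul_le_mul_of_nonneg_right (pow_le_one₀ (norm_nonneg _) hyn) (norm_nonneg _)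
    calc ‖x‖ ^ l / (l.factorial : ℝ) * (‖(y:ℂ)‖ ^ l * ‖g₀ y‖)
        ≤ ‖x‖ ^ l / (l.factorial : ℝ) * (1 * ‖g₀ y‖) :=
          mul_le_mul_of_nonneg_left this (by positivity)
      _ = ‖x‖ ^ l / (l.factorial : ℝ) * ‖g₀ y‖ := by rw [one_mul]
  have hFint : ∀ l : ℕ, Integrable (F l) (volume.restrict (Ioo 0 1)) := by
    intro l
    apply Integrable.mono' (hg₀int.norm.const_mul (‖x‖ ^ l / l.factorial)) (hFmeas l)
    rw [ae_restrict_iff' measurableSet_Ioo]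
    filter_upwards with y hy
    exact hFbound l y hy
  have hFsummable : Summable (fun l : ℕ => ∫ y in Ioo (0:ℝ) 1, ‖F l y‖) := by
    apply Summable.of_nonneg_of_le (fun l => integral_nonneg fun y => norm_nonneg _)
      (fun l => ?_) (((Real.summable_pow_div_factorial ‖x‖)).mul_right
        (∫ y in Ioo (0:ℝ) 1, ‖g₀ y‖))
    calc (∫ y in Ioo (0:ℝ) 1, ‖F l y‖)
        ≤ ∫ y in Ioo (0:ℝ) 1, ‖x‖ ^ l / l.factorial * ‖g₀ y‖ := by
          refine integral_mono_ae (hFint l).norm (hg₀int.norm.const_mul _) ?_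
          exact (ae_restrict_iff' measurableSet_Ioo).mpr
            (Filter.Eventually.of_forall (fun y hy => hFbound l y hy))
      _ = ‖x‖ ^ l / l.factorial * ∫ y in Ioo (0:ℝ) 1, ‖g₀ y‖ := by
          rw [MeasureTheory.integral_const_mul]
  have hHasSum := hasSum_integral_of_summable_integral_norm hFint hFsummable
  -- identify termwise integrals with extBeta terms
  have hval : ∀ l : ℕ, (∫ y in Ioo (0:ℝ) 1, F l y)
      = extBeta η p q (ξ₂ + l) d * x ^ l / l.factorial := by
    intro l
    have hBeq : extBeta η p q (ξ₂ + l) d = ∫ y in Ioo (0:ℝ) 1, (y:ℂ) ^ l * g₀ y := by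
      rw [extBeta, intervalIntegral.integral_of_le zero_le_one,
        ← Measure.restrict_congr_set MeasureTheory.Ioo_ae_eq_Ioc]
      refine setIntegral_congr_fun measurableSet_Ioo (fun y hy => ?_)
      have hyne : (y:ℂ) ≠ 0 := Complex.ofReal_ne_zero.mpr hy.1.ne'
      rw [show ξ₂ + (l:ℂ) - 1 = (ξ₂ - 1) + (l:ℕ) by push_cast; ring,
        Complex.cpow_add _ _ hyne, Complex.cpow_natCast, hg₀_def]
      ring
    rw [hF_def]
    simp only
    rw [MeasureTheory.integral_const_mul, hBeq]
    ring
  have hvals : (fun l => ∫ y in Ioo (0:ℝ) 1, F l y)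
      = fun l : ℕ => extBeta η p q (ξ₂ + l) d * x ^ l / (l.factorial : ℂ) := funext hval
  rw [hvals] at hHasSum
  -- identify the limit integral
  have hexp_tsum : ∀ z : ℂ, (∑' m : ℕ, z ^ m / (m.factorial : ℂ)) = Complex.exp z := by
    intro z; rw [Complex.exp_eq_exp_ℂ, NormedSpace.exp_eq_tsum_div]
  have hlim : (∫ y in Ioo (0:ℝ) 1, ∑' l, F l y)
      = ∫ y in Ioo (0:ℝ) 1, Complex.exp (x * y) * g₀ y := by
    refine setIntegral_congr_fun measurableSet_Ioo (fun y hy => ?_)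
    have hterm : ∀ l : ℕ, F l y = ((x * (y:ℂ)) ^ l / l.factorial) * g₀ y := by
      intro l; rw [hF_def]; simp only; rw [mul_pow]; ring
    rw [tsum_congr hterm, tsum_mul_right, hexp_tsum]
  rw [hlim] at hHasSum
  -- assemble
  rw [extPhi]
  have hterm2 : ∀ l : ℕ, extBeta η p q (ξ₂ + l) d * x ^ l /
      (Complex.betaIntegral ξ₂ d * (l.factorial : ℂ))
      = (1 / Complex.betaIntegral ξ₂ d) *
        (extBeta η p q (ξ₂ + l) d * x ^ l / l.factorial) := by
    intro l
    simp only [div_eq_mul_inv, mul_inv, one_mul]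
    ring
  rw [tsum_congr hterm2, tsum_mul_left, hHasSum.tsum_eq]
  congr 1
  rw [intervalIntegral.integral_of_le zero_le_one,
    ← Measure.restrict_congr_set MeasureTheory.Ioo_ae_eq_Ioc]
  refine setIntegral_congr_fun measurableSet_Ioo (fun y hy => ?_)
  rw [hg₀_def]
  ring
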